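/- Let G be an abelian group such that the intersection of any two nontrivial subgroups of G is infinite (in particular, G is nontrivial). Then G is isomorphic to a subgroup of the additive group ℚ of rational numbers. -/

import Mathlib

theorem abelian_with_infinite_intersections_embeds_in_rat
    (G : Type) [AddCommGroup G] [Nontrivial G]
    (h : ∀ H K : AddSubgroup G, H ≠ ⊥ → K ≠ ⊥ → Infinite ↥(H ⊓ K)) :
    ∃ H : AddSubgroup ℚ, Nonempty (G ≃+ ↥H) := by
  classical
  -- G is torsion-free
  have tf : ∀ (g : G) (m : ℤ), m • g = 0 → m ≠ 0 → g = 0 := by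
    intro g m hmg hm
    by_contra hg
    have hne : AddSubgroup.zmultiples g ≠ ⊥ := by
      simp [AddSubgroup.zmultiples_eq_bot, hg]
    have hinf := h _ _ hne hne
    rw [inf_idem] at hinf
    have hfin : IsOfFinAddOrder g := by
      rw [isOfFinAddOrder_iff_zsmul_eq_zero]
      exact ⟨m, hm, hmg⟩
    have : Finite (AddSubgroup.zmultiples g) := hfin.finite_zmultiples
    exact not_finite_iff_infinite.mpr hinf this
  obtain ⟨g₀, hg₀⟩ := exists_ne (0 : G)
  -- every element satisfies a relation m • g = n • g₀ with m ≠ 0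
  have key : ∀ g : G, ∃ p : ℤ × ℤ, p.1 ≠ 0 ∧ p.1 • g = p.2 • g₀ := by
    intro g
    by_cases hg : g = 0
    · exact ⟨(1, 0), one_ne_zero, by simp [hg]⟩
    · have h1 : AddSubgroup.zmultiples g ≠ ⊥ := by
        simp [AddSubgroup.zmultiples_eq_bot, hg]
      have h2 : AddSubgroup.zmultiples g₀ ≠ ⊥ := by
        simp [AddSubgroup.zmultiples_eq_bot, hg₀]
      have hinf := h _ _ h1 h2
      have : Nontrivial ↥(AddSubgroup.zmultiples g ⊓ AddSubgroup.zmultiples g₀) :=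
        Infinite.instNontrivial _
      obtain ⟨x, hx⟩ := exists_ne (0 : ↥(AddSubgroup.zmultiples g ⊓ AddSubgroup.zmultiples g₀))
      obtain ⟨hxg, hxg₀⟩ := x.2
      obtain ⟨m, hm⟩ := hxg
      obtain ⟨n, hn⟩ := hxg₀
      refine ⟨(m, n), ?_, by simp only [hm, hn]⟩
      rintro rfl
      apply hx
      apply Subtype.ext
      simpa using hm.symm
  choose p hp1 hp2 using key
  set f : G → ℚ := fun g => ((p g).2 : ℚ) / ((p g).1 : ℚ) with hf
  -- uniqueness of the ratio
  have uniq : ∀ (g : G) (m n : ℤ), m ≠ 0 → m • g = n • g₀ → f g = (n : ℚ) / (m : ℚ) := by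
    intro g m n hm hmn
    have h1 : (p g).1 • (m • g) = (p g).1 • (n • g₀) := by rw [hmn]
    have h2 : m • ((p g).1 • g) = m • ((p g).2 • g₀) := by rw [hp2 g]
    have h3 : ((p g).1 * n - m * (p g).2) • g₀ = 0 := by
      rw [sub_smul, sub_eq_zero, mul_smul, mul_smul]
      rw [smul_comm] at h1
      rw [← h2, ← h1, smul_comm]
    have h4 : (p g).1 * n - m * (p g).2 = 0 := by
      by_contra hne
      exact hg₀ (tf g₀ _ h3 hne)
    have h5 : (p g).1 * n = m * (p g).2 := by linarith [h4]
    rw [hf]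
    rw [div_eq_div_iff (by exact_mod_cast hp1 g) (by exact_mod_cast hm)]
    exact_mod_cast (by linear_combination -h5 : (p g).2 * m = n * (p g).1)
  have fadd : ∀ a b : G, f (a + b) = f a + f b := by
    intro a b
    have ha := hp2 a
    have hb := hp2 b
    have hrel : ((p a).1 * (p b).1) • (a + b) =
        ((p a).2 * (p b).1 + (p a).1 * (p b).2) • g₀ := by
      rw [smul_add, add_smul, mul_smul, mul_smul, mul_smul, mul_smul]
      rw [smul_comm (p a).1 (p b).1 a, ha, smul_comm (p b).1 (p a).2 g₀,
        hb]
    have hmm : (p a).1 * (p b).1 ≠ 0 := mul_ne_zero (hp1 a) (hp1 b)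
    rw [uniq (a + b) _ _ hmm hrel]
    have h1a : f a = ((p a).2 : ℚ) / ((p a).1 : ℚ) := rfl
    have h1b : f b = ((p b).2 : ℚ) / ((p b).1 : ℚ) := rfl
    rw [h1a, h1b]
    have ha0 : ((p a).1 : ℚ) ≠ 0 := by exact_mod_cast hp1 a
    have hb0 : ((p b).1 : ℚ) ≠ 0 := by exact_mod_cast hp1 b
    field_simp
    push_cast
    ring
  let F : G →+ ℚ := AddMonoidHom.mk' f fadd
  have hinj : Function.Injective F := by
    intro a b hab
    have : F (a - b) = 0 := by rw [map_sub, hab, sub_self]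
    have hd : f (a - b) = 0 := this
    set g := a - b with hg
    have hd' : ((p g).2 : ℚ) / ((p g).1 : ℚ) = 0 := hd
    have hn0 : (p g).2 = 0 := by
      rcases div_eq_zero_iff.mp hd' with h' | h'
      · exact_mod_cast h'
      · exact absurd (by exact_mod_cast h' : (p g).1 = 0) (hp1 g)
    have : (p g).1 • g = 0 := by rw [hp2 g, hn0, zero_smul]
    have hg0 : g = 0 := tf g _ this (hp1 g)
    exact sub_eq_zero.mp hg0
  exact ⟨F.range, ⟨AddMonoidHom.ofInjective hinj⟩⟩
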